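/- With notation as in the generalized Glynn estimator: for every x ∈ X = R[s_1+1] × ⋯ × R[s_k+1], we have |GenGly_x(A)| ≤ (s_1!⋯s_k!)/√(s_1^{s_1}⋯s_k^{s_k}) · ‖B‖^n. -/

import Mathlib

/-- The operator (spectral) 2-norm of a complex matrix. -/
noncomputable def opNorm {m k : ℕ} (A : Matrix (Fin m) (Fin k) ℂ) : ℝ :=
  ‖LinearMap.toContinuousLinearMap (Matrix.toEuclideanLin A)‖

/-- **Bound on the generalized Glynn estimator.**  Let `B` be `n × k` complex, `s_1,…,s_k > 0`
with `∑ s_j = n`, and let `x ∈ X = R[s_1+1] × ⋯ × R[s_k+1]` (i.e. `x_j^{s_j+1} = 1`).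
With `y_j = √(s_j)·x_j`,
`|GenGly_x(A)| = |(s_1!⋯s_k!)/(s_1^{s_1}⋯s_k^{s_k}) · conj(y_1)^{s_1}⋯conj(y_k)^{s_k} · ∏_i (By)_i|
  ≤ (s_1!⋯s_k!)/√(s_1^{s_1}⋯s_k^{s_k}) · ‖B‖^n`. -/
theorem genGlynn_bound (n k : ℕ) (s : Fin k → ℕ)
    (hpos : ∀ j, 0 < s j) (hsum : ∑ j, s j = n)
    (B : Matrix (Fin n) (Fin k) ℂ)
    (x : Fin k → ℂ) (hx : ∀ j, x j ^ (s j + 1) = 1) :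
    ‖(((∏ j, (s j).factorial : ℕ) : ℂ) / (∏ j, (s j : ℂ) ^ s j) *
        (∏ j, (starRingEnd ℂ) ((Real.sqrt (s j) : ℂ) * x j) ^ s j) *
        ∏ i, ∑ j, ((Real.sqrt (s j) : ℂ) * x j) * B i j)‖
      ≤ ((∏ j, (s j).factorial : ℕ) : ℝ) / Real.sqrt (∏ j, (s j : ℝ) ^ s j)
          * opNorm B ^ n := by
  have habs_x : ∀ j, ‖x j‖ = 1 := by
    intro j
    have h := congrArg (‖·‖) (hx j)
    rw [norm_pow, norm_one] at h
    rcases lt_trichotomy (‖x j‖) 1 with hlt | heq | hgt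
    · have h2 := pow_lt_one₀ (norm_nonneg _) hlt (Nat.succ_ne_zero (s j))
      rw [Nat.succ_eq_add_one] at h2
      linarith
    · exact heq
    · have h2 := one_lt_pow₀ hgt (Nat.succ_ne_zero (s j))
      rw [Nat.succ_eq_add_one] at h2
      linarith
  set y : Fin k → ℂ := fun j => (Real.sqrt (s j) : ℂ) * x j with hy
  have habs_y : ∀ j, ‖y j‖ = Real.sqrt (s j) := by
    intro j
    rw [hy]
    simp only [norm_mul, Complex.norm_real, Real.norm_eq_abs, habs_x j, mul_one,
      abs_of_nonneg (Real.sqrt_nonneg _)]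
  set N : ℝ := ((∏ j, (s j).factorial : ℕ) : ℝ) with hN
  set P : ℝ := ∏ j, (s j : ℝ) ^ s j with hP
  have hP0 : 0 < P := Finset.prod_pos fun j _ =>
    pow_pos (by exact_mod_cast hpos j) _
  have hN0 : 0 ≤ N := Nat.cast_nonneg _
  -- factor 1
  have h1 : ‖(((∏ j, (s j).factorial : ℕ) : ℂ) / (∏ j, (s j : ℂ) ^ s j))‖
      = N / P := by
    rw [norm_div, Complex.norm_natCast, norm_prod, hN, hP]
    congr 1
    exact Finset.prod_congr rfl fun j _ => by rw [norm_pow, Complex.norm_natCast]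
  -- factor 2
  have hsq : (∏ j, Real.sqrt (s j) ^ s j) ^ 2 = P := by
    rw [← Finset.prod_pow, hP]
    refine Finset.prod_congr rfl fun j _ => ?_
    rw [← pow_mul, mul_comm (s j) 2, pow_mul, Real.sq_sqrt (Nat.cast_nonneg _)]
  have hsqrtP : Real.sqrt P = ∏ j, Real.sqrt (s j) ^ s j := by
    rw [← hsq, Real.sqrt_sq (Finset.prod_nonneg fun j _ =>
      pow_nonneg (Real.sqrt_nonneg _) _)]
  have h2 : ‖(∏ j, (starRingEnd ℂ) (y j) ^ s j)‖ = Real.sqrt P := by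
    rw [norm_prod, hsqrtP]
    refine Finset.prod_congr rfl fun j _ => ?_
    rw [norm_pow, Complex.norm_conj, habs_y j]
  -- the norm of y as a Euclidean vector
  have hopB : 0 ≤ opNorm B := norm_nonneg _
  have hYnorm : ‖((WithLp.equiv 2 (Fin k → ℂ)).symm y)‖ ^ 2 = (n : ℝ) := by
    rw [EuclideanSpace.norm_eq,
      Real.sq_sqrt (Finset.sum_nonneg fun j _ => sq_nonneg _)]
    have : ∀ j : Fin k, ‖((WithLp.equiv 2 (Fin k → ℂ)).symm y) j‖ ^ 2 = (s j : ℝ) := by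
      intro j
      have : ((WithLp.equiv 2 (Fin k → ℂ)).symm y) j = y j := rfl
      rw [this, habs_y j, Real.sq_sqrt (Nat.cast_nonneg _)]
    rw [Finset.sum_congr rfl fun j _ => this j]
    exact_mod_cast hsum
  -- sum of squares of the rows is at most ‖B‖² n
  have hsum2 : ∑ i, ‖(∑ j, y j * B i j)‖ ^ 2 ≤ opNorm B ^ 2 * n := by
    have hle := (LinearMap.toContinuousLinearMap (Matrix.toEuclideanLin B)).le_opNorm
      ((WithLp.equiv 2 (Fin k → ℂ)).symm y)
    have hBy : ‖(LinearMap.toContinuousLinearMap (Matrix.toEuclideanLin B))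
        ((WithLp.equiv 2 (Fin k → ℂ)).symm y)‖ ^ 2
        = ∑ i, ‖(∑ j, y j * B i j)‖ ^ 2 := by
      rw [EuclideanSpace.norm_eq,
        Real.sq_sqrt (Finset.sum_nonneg fun i _ => sq_nonneg _)]
      refine Finset.sum_congr rfl fun i _ => ?_
      have : ((LinearMap.toContinuousLinearMap (Matrix.toEuclideanLin B))
          ((WithLp.equiv 2 (Fin k → ℂ)).symm y)) i = ∑ j, B i j * y j := rfl
      rw [this]
      congr 2
      exact Finset.sum_congr rfl fun j _ => mul_comm _ _
    have h2le : ‖(LinearMap.toContinuousLinearMap (Matrix.toEuclideanLin B))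
        ((WithLp.equiv 2 (Fin k → ℂ)).symm y)‖ ^ 2
        ≤ (opNorm B * ‖(WithLp.equiv 2 (Fin k → ℂ)).symm y‖) ^ 2 := by
      exact pow_le_pow_left₀ (norm_nonneg _) hle 2
    rw [hBy] at h2le
    calc ∑ i, ‖(∑ j, y j * B i j)‖ ^ 2
        ≤ (opNorm B * ‖(WithLp.equiv 2 (Fin k → ℂ)).symm y‖) ^ 2 := h2le
      _ = opNorm B ^ 2 * n := by rw [mul_pow, hYnorm]
  -- the product bound via AM-GM
  have h3 : ‖(∏ i, ∑ j, y j * B i j)‖ ≤ opNorm B ^ n := by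
    rw [norm_prod]
    rcases Nat.eq_zero_or_pos n with hn | hn
    · subst hn; simp
    have hn' : (n : ℝ) ≠ 0 := Nat.cast_ne_zero.mpr hn.ne'
    set a : Fin n → ℝ := fun i => ‖(∑ j, y j * B i j)‖ with ha
    have ha0 : ∀ i ∈ Finset.univ, (0 : ℝ) ≤ a i ^ 2 := fun i _ => sq_nonneg _
    have hgm := Real.geom_mean_le_arith_mean_weighted Finset.univ
      (fun _ : Fin n => (n : ℝ)⁻¹) (fun i => a i ^ 2)
      (fun i _ => by positivity)
      (by simp [Finset.sum_const, hn'])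
      ha0
    have hgm2 : (∏ i, a i ^ 2) ^ ((n : ℝ)⁻¹) ≤ opNorm B ^ 2 := by
      calc (∏ i, a i ^ 2) ^ ((n : ℝ)⁻¹)
          = ∏ i, (a i ^ 2) ^ ((n : ℝ)⁻¹) := by
            rw [← Real.finset_prod_rpow _ _ ha0]
        _ ≤ ∑ i, (n : ℝ)⁻¹ * a i ^ 2 := by simpa using hgm
        _ = (n : ℝ)⁻¹ * ∑ i, a i ^ 2 := by rw [Finset.mul_sum]
        _ ≤ (n : ℝ)⁻¹ * (opNorm B ^ 2 * n) := by
            exact mul_le_mul_of_nonneg_left hsum2 (by positivity)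
        _ = opNorm B ^ 2 := by
            rw [mul_comm (opNorm B ^ 2) (n : ℝ), ← mul_assoc,
              inv_mul_cancel₀ hn', one_mul]
    have hprod : ∏ i, a i ^ 2 ≤ (opNorm B ^ 2) ^ n := by
      have := pow_le_pow_left₀ (Real.rpow_nonneg
        (Finset.prod_nonneg ha0) _) hgm2 n
      rwa [Real.rpow_inv_natCast_pow (Finset.prod_nonneg ha0) hn.ne'] at this
    have hfin : (∏ i, a i) ^ 2 ≤ (opNorm B ^ n) ^ 2 := by
      rw [← Finset.prod_pow]
      calc ∏ i, a i ^ 2 ≤ (opNorm B ^ 2) ^ n := hprod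
        _ = (opNorm B ^ n) ^ 2 := by rw [← pow_mul, mul_comm, pow_mul]
    have h0 : 0 ≤ ∏ i, a i := Finset.prod_nonneg fun i _ => norm_nonneg _
    calc ∏ i, a i = Real.sqrt ((∏ i, a i) ^ 2) := (Real.sqrt_sq h0).symm
      _ ≤ Real.sqrt ((opNorm B ^ n) ^ 2) := Real.sqrt_le_sqrt hfin
      _ = opNorm B ^ n := Real.sqrt_sq (pow_nonneg hopB n)
  -- put it all together
  rw [norm_mul, norm_mul, h1, h2]
  have hsq' : Real.sqrt P ≠ 0 := (Real.sqrt_pos.mpr hP0).ne'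
  have key : N / P * Real.sqrt P = N / Real.sqrt P := by
    rw [eq_div_iff hsq', mul_assoc, Real.mul_self_sqrt hP0.le,
      div_mul_cancel₀ _ hP0.ne']
  calc N / P * Real.sqrt P * ‖(∏ i, ∑ j, y j * B i j)‖
      ≤ N / P * Real.sqrt P * opNorm B ^ n := by
        exact mul_le_mul_of_nonneg_left h3
          (mul_nonneg (div_nonneg hN0 hP0.le) (Real.sqrt_nonneg _))
    _ = N / Real.sqrt P * opNorm B ^ n := by rw [key]
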